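/- arXiv:2409.00959 — 3 statements merged into one kernel-verified Lean document; each statement's English description precedes it below -/
import Mathlib

section
/- Let f be C^3 on an open interval I with f'(x) ≠ 0 for all x, and suppose Sf(x) < 0 everywhere. Then f' has no positive local minimum and no negative local maximum on I. -/
noncomputable def Schwarzian (f : ℝ → ℝ) (x : ℝ) : ℝ :=
  iteratedDeriv 3 f x / deriv f x - 3 / 2 * (iteratedDeriv 2 f x / deriv f x) ^ 2

open Filter Set Topology

lemma second_deriv_nonneg_of_isLocalMin (g : ℝ → ℝ) (hg : ContDiff ℝ 2 g)
    (x : ℝ) (h : IsLocalMin g x) : 0 ≤ deriv (deriv g) x := by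
  by_contra hlt
  push_neg at hlt
  have hg1 : ContDiff ℝ 1 (deriv g) :=
    (contDiff_succ_iff_deriv.mp (show ContDiff ℝ (1 + 1) g by exact_mod_cast hg)).2.2
  have hgd2 : Differentiable ℝ (deriv g) := hg1.differentiable one_ne_zero
  have h0 : deriv g x = 0 := h.deriv_eq_zero
  have hder : HasDerivAt (deriv g) (deriv (deriv g) x) x := (hgd2 x).hasDerivAt
  have hslope := hasDerivAt_iff_tendsto_slope.mp hder
  have hneg : ∀ᶠ y in 𝓝[>] x, deriv g y < 0 := by
    have h1 : ∀ᶠ y in 𝓝[≠] x, slope (deriv g) x y < 0 :=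
      hslope.eventually (Iio_mem_nhds hlt)
    have h2 : ∀ᶠ y in 𝓝[>] x, slope (deriv g) x y < 0 :=
      h1.filter_mono (nhdsWithin_mono x (fun y hy => ne_of_gt hy))
    refine h2.mp (eventually_nhdsWithin_of_forall fun y hy hsl => ?_)
    rw [slope_def_field, h0, sub_zero] at hsl
    have hyx : 0 < y - x := sub_pos.mpr hy
    by_contra hcon
    push_neg at hcon
    have : 0 ≤ deriv g y / (y - x) := div_nonneg hcon hyx.le
    linarith
  obtain ⟨u, hu, hIoo⟩ := mem_nhdsGT_iff_exists_Ioo_subset.mp hneg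
  have hmin : ∀ᶠ y in 𝓝[>] x, g x ≤ g y := h.filter_mono nhdsWithin_le_nhds
  have hmem : ∀ᶠ y in 𝓝[>] x, y ∈ Ioo x u := Ioo_mem_nhdsGT_of_mem ⟨le_rfl, hu⟩
  obtain ⟨c, hc1, hc2⟩ := (hmin.and hmem).exists
  have hanti : StrictAntiOn g (Icc x c) := by
    refine strictAntiOn_of_deriv_neg (convex_Icc x c)
      (hg.continuous.continuousOn) (fun y hy => ?_)
    rw [interior_Icc] at hy
    exact hIoo ⟨hy.1, hy.2.trans hc2.2⟩
  have := hanti (left_mem_Icc.mpr hc2.1.le) (right_mem_Icc.mpr hc2.1.le) hc2.1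
  linarith

lemma second_deriv_nonpos_of_isLocalMax (g : ℝ → ℝ) (hg : ContDiff ℝ 2 g)
    (x : ℝ) (h : IsLocalMax g x) : deriv (deriv g) x ≤ 0 := by
  have hneg := second_deriv_nonneg_of_isLocalMin (fun y => -g y) hg.neg x h.neg
  have e1 : deriv (fun y => -g y) = fun y => -deriv g y := funext fun y => deriv.neg
  rw [e1] at hneg
  have e2 : deriv (fun y => -deriv g y) x = -deriv (deriv g) x := deriv.neg
  rw [e2] at hneg
  linarith

theorem no_pos_local_min_of_neg_schwarzian (a b : ℝ) (f : ℝ → ℝ)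
    (hf : ContDiff ℝ 3 f)
    (hd : ∀ x ∈ Set.Ioo a b, deriv f x ≠ 0)
    (hS : ∀ x ∈ Set.Ioo a b, Schwarzian f x < 0) :
    ∀ x ∈ Set.Ioo a b,
      ¬ (IsLocalMin (deriv f) x ∧ 0 < deriv f x) ∧
      ¬ (IsLocalMax (deriv f) x ∧ deriv f x < 0) := by
  intro x hx
  have hg2 : ContDiff ℝ 2 (deriv f) :=
    (contDiff_succ_iff_deriv.mp (show ContDiff ℝ (2 + 1) f by exact_mod_cast hf)).2.2
  have hS' := hS x hx
  have h2 : iteratedDeriv 2 f = deriv (deriv f) := by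
    rw [iteratedDeriv_succ, iteratedDeriv_one]
  have h3 : iteratedDeriv 3 f = deriv (deriv (deriv f)) := by
    rw [iteratedDeriv_succ, iteratedDeriv_succ, iteratedDeriv_one]
  constructor
  · rintro ⟨hmin, hpos⟩
    have h20 : deriv (deriv f) x = 0 := hmin.deriv_eq_zero
    have h30 : 0 ≤ deriv (deriv (deriv f)) x :=
      second_deriv_nonneg_of_isLocalMin (deriv f) hg2 x hmin
    have hSval : Schwarzian f x = deriv (deriv (deriv f)) x / deriv f x := by
      simp [Schwarzian, h2, h3, h20]
    rw [hSval] at hS'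
    have : 0 ≤ deriv (deriv (deriv f)) x / deriv f x := div_nonneg h30 hpos.le
    linarith
  · rintro ⟨hmax, hneg⟩
    have h20 : deriv (deriv f) x = 0 := hmax.deriv_eq_zero
    have h30 : deriv (deriv (deriv f)) x ≤ 0 :=
      second_deriv_nonpos_of_isLocalMax (deriv f) hg2 x hmax
    have hSval : Schwarzian f x = deriv (deriv (deriv f)) x / deriv f x := by
      simp [Schwarzian, h2, h3, h20]
    rw [hSval] at hS'
    have : 0 ≤ deriv (deriv (deriv f)) x / deriv f x :=
      div_nonneg_iff.mpr (Or.inr ⟨h30, hneg.le⟩)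
    linarith
end

section
/- Let g : [a,b] → ℝ be continuous and nonvanishing on [a,b], and suppose g has no positive local minimum and no negative local maximum in (a,b). Then for all x ∈ (a,b), |g(x)| > min{|g(a)|, |g(b)|} or g is constant on [a,b]. -/
open Set

lemma min_principle_pos_helper (a b : ℝ) (hab : a < b) (g : ℝ → ℝ)
    (hc : ContinuousOn g (Set.Icc a b))
    (hpos : ∀ x ∈ Set.Icc a b, 0 < g x)
    (hmin : ∀ x ∈ Set.Ioo a b, ¬ (IsLocalMinOn g (Set.Icc a b) x ∧ 0 < g x)) :
    ∀ x ∈ Set.Ioo a b, min (g a) (g b) < g x := by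
  intro x hx
  by_contra h
  push_neg at h
  have hxI : x ∈ Icc a b := Ioo_subset_Icc_self hx
  obtain ⟨x0, hx0, hm0⟩ := isCompact_Icc.exists_isMinOn (nonempty_Icc.2 hab.le) hc
  have hle : g x0 ≤ g x := hm0 hxI
  by_cases hin : x0 ∈ Ioo a b
  · exact hmin x0 hin ⟨hm0.filter_mono (Filter.le_principal_iff.2 self_mem_nhdsWithin),
      hpos x0 hx0⟩
  · have hend : min (g a) (g b) ≤ g x0 := by
      rcases hx0.1.eq_or_lt with h1 | h1
      · rw [← h1]; exact min_le_left _ _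
      rcases hx0.2.eq_or_lt with h2 | h2
      · rw [h2]; exact min_le_right _ _
      · exact absurd ⟨h1, h2⟩ hin
    have hxmin : IsMinOn g (Icc a b) x := by
      intro y hy
      have : g x ≤ g x0 := le_trans h hend
      exact le_trans this (hm0 hy)
    exact hmin x hx ⟨hxmin.filter_mono (Filter.le_principal_iff.2 self_mem_nhdsWithin),
      hpos x hxI⟩

theorem minimum_principle_of_no_pos_min_neg_max (a b : ℝ) (hab : a < b) (g : ℝ → ℝ)
    (hc : ContinuousOn g (Set.Icc a b))
    (hnz : ∀ x ∈ Set.Icc a b, g x ≠ 0)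
    (hmin : ∀ x ∈ Set.Ioo a b, ¬ (IsLocalMinOn g (Set.Icc a b) x ∧ 0 < g x))
    (hmax : ∀ x ∈ Set.Ioo a b, ¬ (IsLocalMaxOn g (Set.Icc a b) x ∧ g x < 0)) :
    (∀ x ∈ Set.Ioo a b, min |g a| |g b| < |g x|) ∨ (∀ x ∈ Set.Icc a b, g x = g a) := by
  have haI : a ∈ Icc a b := left_mem_Icc.2 hab.le
  have hbI : b ∈ Icc a b := right_mem_Icc.2 hab.le
  have hsign : (∀ x ∈ Icc a b, 0 < g x) ∨ (∀ x ∈ Icc a b, g x < 0) := by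
    by_contra hcon
    push_neg at hcon
    obtain ⟨⟨x, hx, hx0⟩, ⟨y, hy, hy0⟩⟩ := hcon
    have hxneg : g x < 0 := lt_of_le_of_ne hx0 (hnz x hx)
    have hypos : 0 < g y := lt_of_le_of_ne hy0 (Ne.symm (hnz y hy))
    have hsub : uIcc x y ⊆ Icc a b := (ordConnected_Icc).uIcc_subset hx hy
    have h0 : (0 : ℝ) ∈ uIcc (g x) (g y) := by
      rw [Set.mem_uIcc]; left; exact ⟨hxneg.le, hypos.le⟩
    obtain ⟨z, hz, hz0⟩ := intermediate_value_uIcc (hc.mono hsub) h0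
    exact hnz z (hsub hz) hz0
  left
  rcases hsign with hpos | hneg
  · intro x hx
    have := min_principle_pos_helper a b hab g hc hpos hmin x hx
    rwa [abs_of_pos (hpos a haI), abs_of_pos (hpos b hbI),
      abs_of_pos (hpos x (Ioo_subset_Icc_self hx))]
  · have hc' : ContinuousOn (fun y => -g y) (Icc a b) := hc.neg
    have hpos' : ∀ x ∈ Icc a b, 0 < -g x := fun x hx => by
      have := hneg x hx; linarith
    have hmin' : ∀ x ∈ Ioo a b, ¬ (IsLocalMinOn (fun y => -g y) (Icc a b) x ∧ 0 < -g x) := by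
      rintro x hx ⟨h1, h2⟩
      exact hmax x hx ⟨by simpa using h1.neg, by linarith⟩
    intro x hx
    have := min_principle_pos_helper a b hab (fun y => -g y) hc' hpos' hmin' x hx
    rw [abs_of_neg (hneg a haI), abs_of_neg (hneg b hbI),
      abs_of_neg (hneg x (Ioo_subset_Icc_self hx))]
    exact this
end

section
/- Let f be C^3 on an interval with nonzero derivative everywhere relevant, and suppose Sf < 0 everywhere. Then (fⁿ)' satisfies the Minimum Principle on every compact subinterval [a,b] on which (fⁿ)' does not vanish: for all x ∈ (a,b), |(fⁿ)'(x)| > min{|(fⁿ)'(a)|, |(fⁿ)'(b)|}, assuming (fⁿ)' is nonconstant on [a,b]. -/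
private lemma MP.itd2 (f : ℝ → ℝ) : iteratedDeriv 2 f = deriv (deriv f) := by
  rw [show (2:ℕ) = 1+1 from rfl, iteratedDeriv_succ, iteratedDeriv_one]

private lemma MP.itd3 (f : ℝ → ℝ) : iteratedDeriv 3 f = deriv (deriv (deriv f)) := by
  rw [show (3:ℕ) = 1+1+1 from rfl, iteratedDeriv_succ, iteratedDeriv_succ, iteratedDeriv_one]

private lemma MP.cd2 {f : ℝ → ℝ} (h : ContDiff ℝ 3 f) : ContDiff ℝ 2 (deriv f) := by
  rw [show (3 : WithTop ℕ∞) = 2 + 1 by norm_num, contDiff_succ_iff_deriv] at h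
  exact h.2.2

private lemma MP.cd1 {f : ℝ → ℝ} (h : ContDiff ℝ 2 f) : ContDiff ℝ 1 (deriv f) := by
  rw [show (2 : WithTop ℕ∞) = 1 + 1 by norm_num, contDiff_succ_iff_deriv] at h
  exact h.2.2

private lemma MP.d0 {f : ℝ → ℝ} (h : ContDiff ℝ 3 f) : Differentiable ℝ f :=
  h.differentiable (by norm_num)
private lemma MP.d1 {f : ℝ → ℝ} (h : ContDiff ℝ 3 f) : Differentiable ℝ (deriv f) :=
  (MP.cd2 h).differentiable (by norm_num)
private lemma MP.d2 {f : ℝ → ℝ} (h : ContDiff ℝ 3 f) : Differentiable ℝ (deriv (deriv f)) :=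
  (MP.cd1 (MP.cd2 h)).differentiable (by norm_num)
private lemma MP.c3 {f : ℝ → ℝ} (h : ContDiff ℝ 3 f) : Continuous (deriv (deriv (deriv f))) :=
  (contDiff_one_iff_deriv.mp (MP.cd1 (MP.cd2 h))).2

private lemma MP.deriv_comp_fun {u v : ℝ → ℝ} (hu : ContDiff ℝ 3 u) (hv : ContDiff ℝ 3 v) :
    deriv (u ∘ v) = fun x => deriv u (v x) * deriv v x :=
  funext fun x => deriv_comp x (MP.d0 hu (v x)) (MP.d0 hv x)

private lemma MP.hasDeriv2 {u v : ℝ → ℝ} (hu : ContDiff ℝ 3 u) (hv : ContDiff ℝ 3 v) (y : ℝ) :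
    HasDerivAt (fun t => deriv u (v t) * deriv v t)
      (deriv (deriv u) (v y) * (deriv v y)^2 + deriv u (v y) * deriv (deriv v) y) y := by
  have h1 : HasDerivAt (fun t => deriv u (v t)) (deriv (deriv u) (v y) * deriv v y) y :=
    ((MP.d1 hu (v y)).hasDerivAt.comp y (MP.d0 hv y).hasDerivAt)
  have := h1.mul (MP.d1 hv y).hasDerivAt
  exact this.congr_deriv (by ring)

private lemma MP.deriv2_comp {u v : ℝ → ℝ} (hu : ContDiff ℝ 3 u) (hv : ContDiff ℝ 3 v) :
    deriv (deriv (u ∘ v)) =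
      fun y => deriv (deriv u) (v y) * (deriv v y)^2 + deriv u (v y) * deriv (deriv v) y := by
  rw [MP.deriv_comp_fun hu hv]
  exact funext fun y => (MP.hasDeriv2 hu hv y).deriv

private lemma MP.deriv3_comp {u v : ℝ → ℝ} (hu : ContDiff ℝ 3 u) (hv : ContDiff ℝ 3 v) (y : ℝ) :
    deriv (deriv (deriv (u ∘ v))) y =
      deriv (deriv (deriv u)) (v y) * (deriv v y)^3
        + 3 * deriv (deriv u) (v y) * deriv v y * deriv (deriv v) y
        + deriv u (v y) * deriv (deriv (deriv v)) y := by
  rw [MP.deriv2_comp hu hv]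
  have h1 : HasDerivAt (fun t => deriv (deriv u) (v t))
      (deriv (deriv (deriv u)) (v y) * deriv v y) y :=
    ((MP.d2 hu (v y)).hasDerivAt.comp y (MP.d0 hv y).hasDerivAt)
  have h2 : HasDerivAt (fun t => (deriv v t)^2) (2 * deriv v y ^ 1 * deriv (deriv v) y) y :=
    (MP.d1 hv y).hasDerivAt.pow 2
  have h3 : HasDerivAt (fun t => deriv u (v t)) (deriv (deriv u) (v y) * deriv v y) y :=
    ((MP.d1 hu (v y)).hasDerivAt.comp y (MP.d0 hv y).hasDerivAt)
  have H := ((h1.mul h2).add (h3.mul (MP.d2 hv y).hasDerivAt)).deriv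
  exact H.trans (by ring)

private lemma MP.schwarzian_comp {u v : ℝ → ℝ} (hu : ContDiff ℝ 3 u) (hv : ContDiff ℝ 3 v)
    (x : ℝ) (hux : deriv u (v x) ≠ 0) (hvx : deriv v x ≠ 0) :
    Schwarzian (u ∘ v) x = Schwarzian u (v x) * (deriv v x)^2 + Schwarzian v x := by
  unfold Schwarzian
  rw [MP.itd2, MP.itd3, MP.itd2, MP.itd3, MP.itd2, MP.itd3, MP.deriv3_comp hu hv,
    MP.deriv2_comp hu hv, MP.deriv_comp_fun hu hv]
  have hm : deriv u (v x) * deriv v x ≠ 0 := mul_ne_zero hux hvx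
  field_simp
  ring

private lemma MP.iterate_contDiff {f : ℝ → ℝ} (hf : ContDiff ℝ 3 f) (n : ℕ) :
    ContDiff ℝ 3 (f^[n]) := by
  induction n with
  | zero => simpa using contDiff_id
  | succ n ih => rw [Function.iterate_succ']; exact hf.comp ih

private lemma MP.iterate_deriv_ne {f : ℝ → ℝ} (hf : ContDiff ℝ 3 f) (hd : ∀ x, deriv f x ≠ 0)
    (n : ℕ) : ∀ x, deriv (f^[n]) x ≠ 0 := by
  induction n with
  | zero => intro x; simp
  | succ n ih =>
    intro x
    rw [Function.iterate_succ',
      deriv_comp x (hf.differentiable (by norm_num) _)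
        ((MP.iterate_contDiff hf n).differentiable (by norm_num) x)]
    exact mul_ne_zero (hd _) (ih x)

private lemma MP.schwarzian_iterate_neg {f : ℝ → ℝ} (hf : ContDiff ℝ 3 f)
    (hd : ∀ x, deriv f x ≠ 0) (hS : ∀ x, Schwarzian f x < 0) (n : ℕ) (hn : 1 ≤ n) :
    ∀ x, Schwarzian (f^[n]) x < 0 := by
  induction n, hn using Nat.le_induction with
  | base => simpa using hS
  | succ n hn ih =>
    intro x
    rw [Function.iterate_succ',
      MP.schwarzian_comp hf (MP.iterate_contDiff hf n) x (hd _) (MP.iterate_deriv_ne hf hd n x)]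
    have h0 : deriv (f^[n]) x ≠ 0 := MP.iterate_deriv_ne hf hd n x
    have h1 : Schwarzian f (f^[n] x) * (deriv (f^[n]) x) ^ 2 < 0 :=
      mul_neg_of_neg_of_pos (hS _) (by positivity)
    linarith [ih x]

open Set in
private lemma MP.min_principle {g : ℝ → ℝ} (hg : ContDiff ℝ 3 g) (hg' : ∀ x, deriv g x ≠ 0)
    (hSg : ∀ x, Schwarzian g x < 0) (a b : ℝ) (hab : a < b) :
    ∀ x ∈ Set.Ioo a b, min |deriv g a| |deriv g b| < |deriv g x| := by
  intro x hx
  by_contra hcon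
  push_neg at hcon
  set q : ℝ → ℝ := fun y => (deriv g y) ^ 2 with hq
  have hq' : ∀ y, HasDerivAt q (2 * deriv g y * deriv (deriv g) y) y := by
    intro y
    have := ((MP.d1 hg y).hasDerivAt.fun_pow 2)
    simpa [pow_one, mul_comm, mul_assoc, mul_left_comm] using this
  have hqc : Continuous q := ((MP.d1 hg).continuous.pow 2)
  have sqle : ∀ s t : ℝ, |s| ≤ |t| → s ^ 2 ≤ t ^ 2 := by
    intro s t h
    calc s ^ 2 = |s| ^ 2 := (sq_abs s).symm
    _ ≤ |t| ^ 2 := by gcongr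
    _ = t ^ 2 := sq_abs t
  have hxa : q x ≤ q a := sqle _ _ (hcon.trans (min_le_left _ _))
  have hxb : q x ≤ q b := sqle _ _ (hcon.trans (min_le_right _ _))
  obtain ⟨c0, hc0, hmin0⟩ := isCompact_Icc.exists_isMinOn (nonempty_Icc.mpr hab.le)
    (hqc.continuousOn (s := Icc a b))
  have hxI : x ∈ Icc a b := ⟨hx.1.le, hx.2.le⟩
  have key : ∃ c ∈ Ioo a b, IsMinOn q (Icc a b) c := by
    rcases lt_or_ge a c0 with h1 | h1
    · rcases lt_or_ge c0 b with h2 | h2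
      · exact ⟨c0, ⟨h1, h2⟩, hmin0⟩
      · have hc0b : c0 = b := le_antisymm hc0.2 h2
        refine ⟨x, hx, fun y hy => ?_⟩
        exact hxb.trans (hc0b ▸ hmin0 hy)
    · have hc0a : c0 = a := le_antisymm h1 hc0.1
      refine ⟨x, hx, fun y hy => ?_⟩
      exact hxa.trans (hc0a ▸ hmin0 hy)
  obtain ⟨c, hcIoo, hmin⟩ := key
  have hlocal : IsLocalMin q c := hmin.isLocalMin (Icc_mem_nhds hcIoo.1 hcIoo.2)
  have hderiv0 : 2 * deriv g c * deriv (deriv g) c = 0 := by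
    rw [← (hq' c).deriv]; exact hlocal.deriv_eq_zero
  have hg''c : deriv (deriv g) c = 0 := by
    have h2 : (2 : ℝ) * deriv g c ≠ 0 := mul_ne_zero two_ne_zero (hg' c)
    rcases mul_eq_zero.mp hderiv0 with h | h
    · exact absurd h h2
    · exact h
  have hSc := hSg c
  rw [Schwarzian, MP.itd2, MP.itd3, hg''c] at hSc
  simp only [zero_div, ne_eq, OfNat.ofNat_ne_zero, not_false_eq_true, zero_pow, mul_zero,
    sub_zero] at hSc
  have hprod : deriv g c * deriv (deriv (deriv g)) c < 0 := by
    rcases div_neg_iff.mp hSc with ⟨h1, h2⟩ | ⟨h1, h2⟩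
    · nlinarith
    · nlinarith
  set p : ℝ → ℝ := fun y => 2 * deriv g y * deriv (deriv g) y with hp
  have hp' : ∀ y, HasDerivAt p
      (2 * (deriv (deriv g) y * deriv (deriv g) y + deriv g y * deriv (deriv (deriv g)) y)) y := by
    intro y
    have h1 := ((MP.d1 hg y).hasDerivAt.const_mul (2 : ℝ)).mul (MP.d2 hg y).hasDerivAt
    exact h1.congr_deriv (by ring)
  have hpc : Continuous p :=
    (continuous_const.mul (MP.d1 hg).continuous).mul (MP.d2 hg).continuous
  have hDpc : (2 : ℝ) * (deriv (deriv g) c * deriv (deriv g) c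
      + deriv g c * deriv (deriv (deriv g)) c) < 0 := by
    rw [hg''c]; nlinarith
  set Dp : ℝ → ℝ := fun y => 2 * (deriv (deriv g) y * deriv (deriv g) y
      + deriv g y * deriv (deriv (deriv g)) y) with hDp
  have hDpcont : Continuous Dp := by
    apply Continuous.mul continuous_const
    exact ((MP.d2 hg).continuous.mul (MP.d2 hg).continuous).add
      ((MP.d1 hg).continuous.mul (MP.c3 hg))
  obtain ⟨δ, hδpos, hδ⟩ := Metric.continuous_iff.mp hDpcont c (-(Dp c))
    (by simpa [hDp] using neg_pos.mpr hDpc)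
  have hDpneg : ∀ y, dist y c < δ → Dp y < 0 := by
    intro y hy
    have := hδ y hy
    have h2 := abs_lt.mp (by simpa [Real.dist_eq] using this)
    linarith [h2.2]
  set ε : ℝ := min δ (c - a) / 2 with hε
  have hεpos : 0 < ε := by
    have : 0 < c - a := by linarith [hcIoo.1]
    positivity
  have hεδ : ε < δ := by
    have : min δ (c - a) ≤ δ := min_le_left _ _
    linarith
  have hεca : ε < c - a := by
    have : min δ (c - a) ≤ c - a := min_le_right _ _
    linarith
  have hanti : StrictAntiOn p (Icc (c - ε) c) := by
    apply strictAntiOn_of_deriv_neg (convex_Icc _ _) hpc.continuousOn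
    intro y hy
    rw [interior_Icc] at hy
    rw [(hp' y).deriv]
    apply hDpneg
    rw [Real.dist_eq, abs_lt]
    constructor <;> [linarith [hy.1]; linarith [hy.2, hεpos]]
  have hppos : ∀ y ∈ Ico (c - ε) c, 0 < p y := by
    intro y hy
    have := hanti ⟨hy.1, hy.2.le⟩ ⟨by linarith [hεpos], le_refl c⟩ hy.2
    have hpc0 : p c = 0 := by simpa [hp] using hderiv0
    linarith
  have hmono : StrictMonoOn q (Icc (c - ε) c) := by
    apply strictMonoOn_of_deriv_pos (convex_Icc _ _) hqc.continuousOn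
    intro y hy
    rw [interior_Icc] at hy
    rw [(hq' y).deriv]
    exact hppos y ⟨hy.1.le, hy.2⟩
  have hlt : q (c - ε) < q c :=
    hmono ⟨le_refl _, by linarith [hεpos]⟩ ⟨by linarith [hεpos], le_refl c⟩ (by linarith [hεpos])
  have hge : q c ≤ q (c - ε) := hmin ⟨by linarith, by linarith [hcIoo.2, hεpos]⟩
  linarith

theorem iterate_deriv_minimum_principle (f : ℝ → ℝ)
    (hf : ContDiff ℝ 3 f)
    (hd : ∀ x, deriv f x ≠ 0)
    (hS : ∀ x, Schwarzian f x < 0)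
    (n : ℕ) (hn : 1 ≤ n) (a b : ℝ) (hab : a < b)
    (hnz : ∀ x ∈ Set.Icc a b, deriv (f^[n]) x ≠ 0)
    (hnc : ¬ ∀ x ∈ Set.Icc a b, deriv (f^[n]) x = deriv (f^[n]) a) :
    ∀ x ∈ Set.Ioo a b,
      min |deriv (f^[n]) a| |deriv (f^[n]) b| < |deriv (f^[n]) x| := by
  exact MP.min_principle (MP.iterate_contDiff hf n) (MP.iterate_deriv_ne hf hd n)
    (MP.schwarzian_iterate_neg hf hd hS n hn) a b hab
end
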